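/- Let (X,d) be a metric space, f: X → X a Lipschitz continuous map, and k ∈ ℕ. If a set S ⊆ X is uniformly Li–Yorke scrambled for f, then S is uniformly Li–Yorke scrambled for f^k (the k-th iterate). -/
import Mathlib


open Filter Topology

theorem stmt19 {X : Type*} [MetricSpace X] (f : X → X)
    (L : ℝ) (hL : ∀ x y : X, dist (f x) (f y) ≤ L * dist x y)
    (k : ℕ) (hk : 1 ≤ k) (S : Set X)
    (hscr : ∃ p q : ℕ → ℕ, ∀ x ∈ S, ∀ y ∈ S, x ≠ y →
      Tendsto (fun n => dist (f^[p n] x) (f^[p n] y)) atTop (𝓝 0) ∧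
      Tendsto (fun n => dist (f^[q n] x) (f^[q n] y)) atTop atTop) :
    ∃ p q : ℕ → ℕ, ∀ x ∈ S, ∀ y ∈ S, x ≠ y →
      Tendsto (fun n => dist ((f^[k])^[p n] x) ((f^[k])^[p n] y)) atTop (𝓝 0) ∧
      Tendsto (fun n => dist ((f^[k])^[q n] x) ((f^[k])^[q n] y)) atTop atTop := by
  obtain ⟨p, q, hpq⟩ := hscr
  set C : ℝ := max L 1 with hC
  have hC1 : (1 : ℝ) ≤ C := le_max_right _ _
  have hC0 : (0 : ℝ) < C := lt_of_lt_of_le one_pos hC1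
  have hLC : ∀ x y : X, dist (f x) (f y) ≤ C * dist x y := fun x y =>
    (hL x y).trans (mul_le_mul_of_nonneg_right (le_max_left _ _) dist_nonneg)
  have iter : ∀ (m : ℕ) (x y : X), dist (f^[m] x) (f^[m] y) ≤ C ^ m * dist x y := by
    intro m
    induction m with
    | zero => intro x y; simp
    | succ m ih =>
        intro x y
        rw [Function.iterate_succ_apply', Function.iterate_succ_apply']
        calc dist (f (f^[m] x)) (f (f^[m] y)) ≤ C * dist (f^[m] x) (f^[m] y) := hLC _ _
          _ ≤ C * (C ^ m * dist x y) := mul_le_mul_of_nonneg_left (ih x y) hC0.le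
          _ = C ^ (m + 1) * dist x y := by ring
  -- general gap bound
  have gap : ∀ (a b : ℕ) (x y : X), a ≤ b →
      dist (f^[b] x) (f^[b] y) ≤ C ^ (b - a) * dist (f^[a] x) (f^[a] y) := by
    intro a b x y hab
    have : f^[b] x = f^[b - a] (f^[a] x) := by
      rw [← Function.iterate_add_apply]
      congr 1; omega
    rw [this, show f^[b] y = f^[b - a] (f^[a] y) by
      rw [← Function.iterate_add_apply]; congr 1; omega]
    exact iter _ _ _
  have Cpow_le : ∀ {a b : ℕ}, a ≤ b → C ^ a ≤ C ^ b := fun h =>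
    pow_le_pow_right₀ hC1 h
  refine ⟨fun n => (p n + k - 1) / k, fun n => q n / k, fun x hx y hy hxy => ?_⟩
  obtain ⟨h0, hinf⟩ := hpq x hx y hy hxy
  constructor
  · -- convergence part
    have key : ∀ n, dist ((f^[k])^[(p n + k - 1) / k] x) ((f^[k])^[(p n + k - 1) / k] y)
        ≤ C ^ (k - 1) * dist (f^[p n] x) (f^[p n] y) := by
      intro n
      set a := p n with ha
      set m := (a + k - 1) / k with hm
      have hd := Nat.div_add_mod (a + k - 1) k
      rw [← hm] at hd
      have hmod := Nat.mod_lt (a + k - 1) (show 0 < k by omega)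
      have h1 : a ≤ k * m := by omega
      have h2 : k * m - a ≤ k - 1 := by omega
      rw [← Function.iterate_mul]
      calc dist (f^[k * m] x) (f^[k * m] y)
          ≤ C ^ (k * m - a) * dist (f^[a] x) (f^[a] y) := gap a (k * m) x y h1
        _ ≤ C ^ (k - 1) * dist (f^[a] x) (f^[a] y) :=
            mul_le_mul_of_nonneg_right (Cpow_le h2) dist_nonneg
    have hlim : Tendsto (fun n => C ^ (k - 1) * dist (f^[p n] x) (f^[p n] y)) atTop (𝓝 0) := by
      simpa using h0.const_mul (C ^ (k - 1))
    exact squeeze_zero (fun n => dist_nonneg) key hlim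
  · -- divergence part
    have key : ∀ n, dist (f^[q n] x) (f^[q n] y) / C ^ (k - 1)
        ≤ dist ((f^[k])^[q n / k] x) ((f^[k])^[q n / k] y) := by
      intro n
      set b := q n with hb
      set m := b / k with hm
      have hd := Nat.div_add_mod b k
      rw [← hm] at hd
      have hmod := Nat.mod_lt b (show 0 < k by omega)
      have h1 : k * m ≤ b := by omega
      have h2 : b - k * m ≤ k - 1 := by omega
      rw [← Function.iterate_mul, div_le_iff₀ (pow_pos hC0 _)]
      calc dist (f^[b] x) (f^[b] y)
          ≤ C ^ (b - k * m) * dist (f^[k * m] x) (f^[k * m] y) := gap (k * m) b x y h1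
        _ ≤ C ^ (k - 1) * dist (f^[k * m] x) (f^[k * m] y) :=
            mul_le_mul_of_nonneg_right (Cpow_le h2) dist_nonneg
        _ = dist (f^[k * m] x) (f^[k * m] y) * C ^ (k - 1) := mul_comm _ _
    exact tendsto_atTop_mono key (hinf.atTop_div_const (pow_pos hC0 _))
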